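/- For all real numbers a, b, d with 0 < a ≤ b and 0 < d, there exists a constant L ≥ 1 (depending only on a, b, d) such that for all points p, q, r in ℍ with pairwise distances in [a, b] and all three altitudes at least d (i.e. Metric.infDist p (L(q,r)) ≥ d, Metric.infDist q (L(p,r)) ≥ d, Metric.infDist r (L(p,q)) ≥ d), there exists a map f from the standard 2-simplex Δ := {x ∈ ℝ × ℝ : 0 ≤ x.1 ∧ 0 ≤ x.2 ∧ x.1 + x.2 ≤ 1} into ℍ with f(0,0) = p, f(1,0) = q, f(0,1) = r, satisfying (1/L)·dist x y ≤ dist (f x) (f y) ≤ L·dist x y for all x, y ∈ Δ. (This is the two-dimensional case of the paper's Lemma 1: for each n ≥ 2, b > a > 0, d > 0 there is a constant L = L(n,a,b,d) such that every (a,b,d)-good geodesic simplex — one with edge lengths in [a,b] and every vertex at distance at least d from the hyperplane through the remaining vertices — is L-bilipschitz diffeomorphic to the standard Euclidean n-simplex.) -/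

import Mathlib

set_option maxHeartbeats 1000000


open scoped UpperHalfPlane

/-- The geodesic line through `q` and `r` in the hyperbolic plane: the set of points
metrically collinear with `q` and `r`. -/
def geodLine (q r : ℍ) : Set ℍ :=
  {x | dist q x + dist x r = dist q r ∨ dist q r + dist r x = dist q x ∨
       dist x q + dist q r = dist x r}

/-- The standard 2-simplex in `ℝ × ℝ`. -/
def stdSimplex2 : Set (ℝ × ℝ) := {x | 0 ≤ x.1 ∧ 0 ≤ x.2 ∧ x.1 + x.2 ≤ 1}

/-- The standard Euclidean distance on `ℝ × ℝ`. -/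
noncomputable def eucDist (x y : ℝ × ℝ) : ℝ :=
  Real.sqrt ((x.1 - y.1) ^ 2 + (x.2 - y.2) ^ 2)

open Real

namespace HypAux

open UpperHalfPlane


open UpperHalfPlane

/-- A bundled isometry of `ℍ` with explicit inverse. -/
structure Iso where
  g : ℍ → ℍ
  ginv : ℍ → ℍ
  left : ∀ z, ginv (g z) = z
  right : ∀ z, g (ginv z) = z
  dist_g : ∀ z w, dist (g z) (g w) = dist z w

lemma Iso.dist_ginv (e : Iso) (z w : ℍ) : dist (e.ginv z) (e.ginv w) = dist z w := by
  rw [← e.dist_g, e.right, e.right]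

def Iso.comp (e₁ e₂ : Iso) : Iso where
  g := e₂.g ∘ e₁.g
  ginv := e₁.ginv ∘ e₂.ginv
  left := fun z => by simp [e₂.left, e₁.left]
  right := fun z => by simp [e₁.right, e₂.right]
  dist_g := fun z w => by simp [e₂.dist_g, e₁.dist_g]

noncomputable def Tg (c : ℝ) (z : ℍ) : ℍ :=
  mk ((z : ℂ) - c) (by simpa using z.im_pos)

@[simp] lemma Tg_coe (c : ℝ) (z : ℍ) : (Tg c z : ℂ) = (z : ℂ) - c := rfl
@[simp] lemma Tg_im (c : ℝ) (z : ℍ) : (Tg c z).im = z.im := by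
  rw [show (Tg c z).im = ((z : ℂ) - (c : ℂ)).im from rfl]
  simp

noncomputable def Tiso (c : ℝ) : Iso where
  g := Tg c
  ginv := Tg (-c)
  left := fun z => by ext; simp [Tg]
  right := fun z => by ext; simp [Tg]
  dist_g := fun z w => by
    rw [UpperHalfPlane.dist_eq, UpperHalfPlane.dist_eq, Tg_im, Tg_im, Tg_coe, Tg_coe,
      dist_sub_right]

noncomputable def Sg (t : ℝ) (ht : 0 < t) (z : ℍ) : ℍ :=
  mk ((t : ℂ) * z) (by
    have : ((t : ℂ) * z).im = t * z.im := by simp [Complex.mul_im]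
    rw [this]; exact mul_pos ht z.im_pos)

@[simp] lemma Sg_coe (t : ℝ) (ht : 0 < t) (z : ℍ) : (Sg t ht z : ℂ) = (t : ℂ) * z := rfl
@[simp] lemma Sg_im (t : ℝ) (ht : 0 < t) (z : ℍ) : (Sg t ht z).im = t * z.im := by
  rw [show (Sg t ht z).im = ((t : ℂ) * (z : ℂ)).im from rfl]
  simp [Complex.mul_im]

noncomputable def Siso (t : ℝ) (ht : 0 < t) : Iso where
  g := Sg t ht
  ginv := Sg t⁻¹ (by positivity)
  left := fun z => by
    have htc : (t : ℂ) ≠ 0 := by exact_mod_cast ht.ne'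
    ext
    simp only [Sg_coe]
    rw [← mul_assoc, ← Complex.ofReal_mul, inv_mul_cancel₀ ht.ne', Complex.ofReal_one, one_mul]
  right := fun z => by
    have htc : (t : ℂ) ≠ 0 := by exact_mod_cast ht.ne'
    ext
    simp only [Sg_coe]
    rw [← mul_assoc, ← Complex.ofReal_mul, mul_inv_cancel₀ ht.ne', Complex.ofReal_one, one_mul]
  dist_g := fun z w => by
    rw [UpperHalfPlane.dist_eq, UpperHalfPlane.dist_eq, Sg_im, Sg_im, Sg_coe, Sg_coe]
    congr 2
    rw [Complex.dist_eq, Complex.dist_eq, ← mul_sub, norm_mul, Complex.norm_real,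
      Real.norm_eq_abs, abs_of_pos ht]
    rw [show t * z.im * (t * w.im) = t ^ 2 * (z.im * w.im) by ring, Real.sqrt_mul (by positivity),
      Real.sqrt_sq ht.le]
    field_simp

lemma coe_ne_zero (z : ℍ) : (z : ℂ) ≠ 0 := z.ne_zero

noncomputable def Jg (z : ℍ) : ℍ :=
  mk (-(z : ℂ)⁻¹) (by
    have hz : (z : ℂ) ≠ 0 := coe_ne_zero z
    have : (-(z : ℂ)⁻¹).im = z.im / Complex.normSq z := by
      simp [Complex.inv_im, neg_div]
    rw [this]
    exact div_pos z.im_pos (Complex.normSq_pos.2 hz))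

@[simp] lemma Jg_coe (z : ℍ) : (Jg z : ℂ) = -(z : ℂ)⁻¹ := rfl
@[simp] lemma Jg_im (z : ℍ) : (Jg z).im = z.im / Complex.normSq (z : ℂ) := by
  rw [show (Jg z).im = (-((z : ℂ))⁻¹).im from rfl]
  simp [Complex.inv_im, neg_div]

noncomputable def Jiso : Iso where
  g := Jg
  ginv := Jg
  left := fun z => by
    ext
    simp only [Jg_coe]
    rw [inv_neg, neg_neg, inv_inv]
  right := fun z => by
    ext
    simp only [Jg_coe]
    rw [inv_neg, neg_neg, inv_inv]
  dist_g := fun z w => by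
    have hz : (z : ℂ) ≠ 0 := coe_ne_zero z
    have hw : (w : ℂ) ≠ 0 := coe_ne_zero w
    rw [UpperHalfPlane.dist_eq, UpperHalfPlane.dist_eq, Jg_im, Jg_im, Jg_coe, Jg_coe]
    congr 2
    rw [Complex.dist_eq, Complex.dist_eq]
    have h1 : -(z:ℂ)⁻¹ - -(w:ℂ)⁻¹ = ((z:ℂ) - w) / ((z:ℂ) * w) := by
      field_simp
      ring
    rw [h1, norm_div, norm_mul]
    rw [Complex.normSq_eq_norm_sq, Complex.normSq_eq_norm_sq]
    rw [show z.im / ‖(z:ℂ)‖ ^ 2 * (w.im / ‖(w:ℂ)‖ ^ 2)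
        = (z.im * w.im) / (‖(z:ℂ)‖ * ‖(w:ℂ)‖) ^ 2 by ring]
    rw [Real.sqrt_div' _ (by positivity), Real.sqrt_sq (by positivity)]
    have haz : ‖(z:ℂ)‖ ≠ 0 := by simpa using hz
    have haw : ‖(w:ℂ)‖ ≠ 0 := by simpa using hw
    field_simp



lemma collinear_real (α β γ : ℝ) :
    |α - γ| + |γ - β| = |α - β| ∨ |α - β| + |β - γ| = |α - γ| ∨
      |γ - α| + |α - β| = |γ - β| := by
  rcases abs_cases (α - γ) with ⟨h1, s1⟩ | ⟨h1, s1⟩ <;>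
  rcases abs_cases (γ - β) with ⟨h2, s2⟩ | ⟨h2, s2⟩ <;>
  rcases abs_cases (α - β) with ⟨h3, s3⟩ | ⟨h3, s3⟩ <;>
  rcases abs_cases (β - γ) with ⟨h4, s4⟩ | ⟨h4, s4⟩ <;>
  rcases abs_cases (γ - α) with ⟨h5, s5⟩ | ⟨h5, s5⟩ <;>
  rw [h1, h2, h3, h4, h5] <;>
  first
    | (left; linarith)
    | (right; left; linarith)
    | (right; right; linarith)

lemma sinh_le_mul_cosh {u : ℝ} (hu : 0 ≤ u) : Real.sinh u ≤ u * Real.cosh u := by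
  have hd : ∀ x : ℝ, HasDerivAt (fun y => y * Real.cosh y - Real.sinh y) (x * Real.sinh x) x := by
    intro x
    have h1 := (hasDerivAt_id x).mul (Real.hasDerivAt_cosh x)
    have h2 := Real.hasDerivAt_sinh x
    refine (h1.sub h2).congr_deriv ?_
    simp only [one_mul, id_eq]
    ring
  have mono : MonotoneOn (fun y => y * Real.cosh y - Real.sinh y) (Set.Ici (0 : ℝ)) := by
    apply monotoneOn_of_deriv_nonneg (convex_Ici 0)
    · exact ((continuous_id.mul Real.continuous_cosh).sub Real.continuous_sinh).continuousOn
    · intro x hx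
      exact ((hd x).differentiableAt).differentiableWithinAt
    · intro x hx
      rw [(hd x).deriv]
      rw [interior_Ici] at hx
      exact mul_nonneg (le_of_lt hx) (Real.sinh_nonneg_iff.2 hx.le)
  have h0 : (0 : ℝ) ∈ Set.Ici (0 : ℝ) := Set.mem_Ici.2 (le_refl 0)
  have := mono h0 (Set.mem_Ici.2 hu) hu
  simp at this
  linarith

lemma le_arsinh_div {ρ : ℝ} (hρ : 0 ≤ ρ) : ρ / Real.sqrt (1 + ρ ^ 2) ≤ Real.arsinh ρ := by
  have hu : 0 ≤ Real.arsinh ρ := Real.arsinh_nonneg_iff.2 hρ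
  have h := sinh_le_mul_cosh hu
  rw [Real.sinh_arsinh, Real.cosh_arsinh] at h
  rw [div_le_iff₀ (by positivity)]
  linarith

lemma cross_sq_le (z w : ℂ) :
    (z.re * w.im - z.im * w.re) ^ 2 ≤ ‖z‖ ^ 2 * ‖w‖ ^ 2 := by
  rw [Complex.sq_norm, Complex.sq_norm, Complex.normSq_apply, Complex.normSq_apply]
  nlinarith [sq_nonneg (z.re * w.re + z.im * w.im)]



lemma vertical_mem_geodLine (z w x : ℍ) (hzw : z.re = w.re) (hx : x.re = z.re) :
    x ∈ geodLine z w := by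
  have d1 : dist z x = |Real.log z.im - Real.log x.im| := by
    rw [UpperHalfPlane.dist_of_re_eq hx.symm, Real.dist_eq]
  have d2 : dist x w = |Real.log x.im - Real.log w.im| := by
    rw [UpperHalfPlane.dist_of_re_eq (hx.trans hzw), Real.dist_eq]
  have d3 : dist z w = |Real.log z.im - Real.log w.im| := by
    rw [UpperHalfPlane.dist_of_re_eq hzw, Real.dist_eq]
  have d4 : dist w x = |Real.log w.im - Real.log x.im| := by
    rw [UpperHalfPlane.dist_of_re_eq (hzw.symm.trans hx.symm), Real.dist_eq]
  have d5 : dist x z = |Real.log x.im - Real.log z.im| := by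
    rw [UpperHalfPlane.dist_of_re_eq hx, Real.dist_eq]
  show dist z x + dist x w = dist z w ∨ dist z w + dist w x = dist z x ∨
      dist x z + dist z w = dist x w
  rw [d1, d2, d3, d4, d5]
  exact collinear_real (Real.log z.im) (Real.log w.im) (Real.log x.im)

lemma ginv_mem_geodLine (e : Iso) (p q x : ℍ) (hx : x ∈ geodLine (e.g p) (e.g q)) :
    e.ginv x ∈ geodLine p q := by
  have h1 : dist p (e.ginv x) = dist (e.g p) x := by
    rw [← e.dist_g p (e.ginv x), e.right]
  have h2 : dist (e.ginv x) q = dist x (e.g q) := by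
    rw [← e.dist_g (e.ginv x) q, e.right]
  have h3 : dist p q = dist (e.g p) (e.g q) := (e.dist_g p q).symm
  have h4 : dist q (e.ginv x) = dist (e.g q) x := by
    rw [← e.dist_g q (e.ginv x), e.right]
  have h5 : dist (e.ginv x) p = dist x (e.g p) := by
    rw [← e.dist_g (e.ginv x) p, e.right]
  show dist p (e.ginv x) + dist (e.ginv x) q = dist p q ∨
      dist p q + dist q (e.ginv x) = dist p (e.ginv x) ∨
      dist (e.ginv x) p + dist p q = dist (e.ginv x) q
  rw [h1, h2, h3, h4, h5]
  exact hx

/-- The key circle computation: if `z` lies on the circle centered at `u + ρ` (on the real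
axis) with radius `ρ`, then `-1/(z - u)` has real part `-1/(2ρ)`. -/
lemma re_inv_of_on_circle (u ρ : ℝ) (hρ : 0 < ρ) (z : ℂ) (him : 0 < z.im)
    (hz : Complex.normSq (z - (u + ρ : ℝ)) = ρ ^ 2) :
    (-(z - (u : ℝ))⁻¹).re = -1 / (2 * ρ) := by
  have hexp : (z.re - u) ^ 2 + z.im ^ 2 = 2 * ρ * (z.re - u) := by
    have := hz
    rw [Complex.normSq_apply] at this
    simp only [Complex.sub_re, Complex.sub_im, Complex.ofReal_re, Complex.ofReal_im, sub_zero] at this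
    push_cast at this
    nlinarith [this]
  have hpos : 0 < z.re - u := by
    nlinarith [sq_nonneg (z.re - u), him, sq_nonneg z.im]
  have hns : Complex.normSq (z - (u : ℝ)) = 2 * ρ * (z.re - u) := by
    rw [Complex.normSq_apply]
    simp only [Complex.sub_re, Complex.sub_im, Complex.ofReal_re, Complex.ofReal_im, sub_zero]
    nlinarith [hexp]
  have hre : (z - (u : ℝ)).re = z.re - u := by simp
  rw [Complex.neg_re, Complex.inv_re, hre, hns]
  field_simp


@[simp] lemma Tg_re (c : ℝ) (z : ℍ) : (Tg c z).re = z.re - c := by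
  rw [show (Tg c z).re = ((z : ℂ) - (c : ℂ)).re from rfl]
  simp

@[simp] lemma Sg_re (t : ℝ) (ht : 0 < t) (z : ℍ) : (Sg t ht z).re = t * z.re := by
  rw [show (Sg t ht z).re = ((t : ℂ) * (z : ℂ)).re from rfl]
  simp [Complex.mul_re]

lemma normSq_eq_sq_of_circle {p q : ℍ} (h : p.re ≠ q.re) :
    ∃ c : ℝ, Complex.normSq ((p : ℂ) - c) = Complex.normSq ((q : ℂ) - c) := by
  refine ⟨(p.re ^ 2 + p.im ^ 2 - q.re ^ 2 - q.im ^ 2) / (2 * (p.re - q.re)), ?_⟩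
  have hne : p.re - q.re ≠ 0 := sub_ne_zero.2 h
  rw [Complex.normSq_apply, Complex.normSq_apply]
  simp only [Complex.sub_re, Complex.sub_im, Complex.ofReal_re, Complex.ofReal_im, sub_zero,
    UpperHalfPlane.coe_re, UpperHalfPlane.coe_im]
  field_simp
  ring

lemma normalize (p q : ℍ) :
    ∃ e : Iso, (e.g p).re = 0 ∧ (e.g q).re = 0 ∧ (e.g p).im = 1 := by
  obtain ⟨e₁, h₁⟩ : ∃ e₁ : Iso, (e₁.g p).re = (e₁.g q).re := by
    by_cases h : p.re = q.re
    · exact ⟨Tiso 0, by simp [Tiso, h]⟩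
    · obtain ⟨c, hc⟩ := normSq_eq_sq_of_circle h
      set ρ : ℝ := Real.sqrt (Complex.normSq ((p : ℂ) - c)) with hρdef
      have hnsp : 0 < Complex.normSq ((p : ℂ) - c) := by
        rw [Complex.normSq_pos]
        intro h0
        have : ((p : ℂ) - c).im = 0 := by rw [h0]; simp
        simp only [Complex.sub_im, Complex.ofReal_im, sub_zero, UpperHalfPlane.coe_im] at this
        exact p.im_ne_zero this
      have hρ : 0 < ρ := Real.sqrt_pos.2 hnsp
      have hcu : (c : ℝ) = (c - ρ) + ρ := by ring
      have hzp : Complex.normSq ((p : ℂ) - ((c - ρ) + ρ : ℝ)) = ρ ^ 2 := by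
        rw [show (((c - ρ) + ρ : ℝ) : ℂ) = (c : ℝ) by push_cast; ring]
        rw [hρdef, Real.sq_sqrt hnsp.le]
      have hzq : Complex.normSq ((q : ℂ) - ((c - ρ) + ρ : ℝ)) = ρ ^ 2 := by
        rw [show (((c - ρ) + ρ : ℝ) : ℂ) = (c : ℝ) by push_cast; ring]
        rw [← hc, hρdef, Real.sq_sqrt hnsp.le]
      refine ⟨(Tiso (c - ρ)).comp Jiso, ?_⟩
      have hp' : ((((Tiso (c - ρ)).comp Jiso).g p : ℍ) : ℂ) = -((p : ℂ) - ((c - ρ) : ℝ))⁻¹ := rfl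
      have hq' : ((((Tiso (c - ρ)).comp Jiso).g q : ℍ) : ℂ) = -((q : ℂ) - ((c - ρ) : ℝ))⁻¹ := rfl
      have hrp := re_inv_of_on_circle (c - ρ) ρ hρ (p : ℂ) p.im_pos hzp
      have hrq := re_inv_of_on_circle (c - ρ) ρ hρ (q : ℂ) q.im_pos hzq
      show ((((Tiso (c - ρ)).comp Jiso).g p : ℍ) : ℂ).re = ((((Tiso (c - ρ)).comp Jiso).g q : ℍ) : ℂ).re
      rw [hp', hq', hrp, hrq]
  set z₁ := e₁.g p with hz₁
  set e₂ := e₁.comp (Tiso z₁.re) with he₂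
  have hp2 : (e₂.g p).re = 0 := by
    show (Tg z₁.re (e₁.g p)).re = 0
    rw [Tg_re, sub_self]
  have hq2 : (e₂.g q).re = 0 := by
    show (Tg z₁.re (e₁.g q)).re = 0
    rw [Tg_re, ← h₁, sub_self]
  have htpos : 0 < (e₂.g p).im := (e₂.g p).im_pos
  set t : ℝ := ((e₂.g p).im)⁻¹ with htdef
  have ht : 0 < t := by positivity
  refine ⟨e₂.comp (Siso t ht), ?_, ?_, ?_⟩
  · show (Sg t ht (e₂.g p)).re = 0
    rw [Sg_re, hp2, mul_zero]
  · show (Sg t ht (e₂.g q)).re = 0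
    rw [Sg_re, hq2, mul_zero]
  · show (Sg t ht (e₂.g p)).im = 1
    rw [Sg_im, htdef]
    exact inv_mul_cancel₀ htpos.ne'


lemma dist_le_div (z w : ℍ) (m : ℝ) (hm : 0 < m) (hz : m ≤ z.im) (hw : m ≤ w.im) :
    dist z w ≤ dist (z : ℂ) (w : ℂ) / m := by
  refine (UpperHalfPlane.dist_le_dist_coe_div_sqrt z w).trans ?_
  have hs : m ≤ Real.sqrt (z.im * w.im) := by
    rw [show m = Real.sqrt (m ^ 2) by rw [Real.sqrt_sq hm.le]]
    apply Real.sqrt_le_sqrt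
    nlinarith
  gcongr

lemma div_le_dist (z w : ℍ) (m M R : ℝ) (hm : 0 < m) (hzm : m ≤ z.im) (hwm : m ≤ w.im)
    (hzM : z.im ≤ M) (hwM : w.im ≤ M) (hR : dist (z : ℂ) (w : ℂ) ≤ 2 * m * R) :
    dist (z : ℂ) (w : ℂ) / (M * Real.sqrt (1 + R ^ 2)) ≤ dist z w := by
  have hM : 0 < M := lt_of_lt_of_le hm (hzm.trans hzM)
  set D := dist (z : ℂ) (w : ℂ) with hD
  have hD0 : 0 ≤ D := dist_nonneg
  have hsq : 0 < Real.sqrt (z.im * w.im) := by positivity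
  set ρ := D / (2 * Real.sqrt (z.im * w.im)) with hρdef
  have hρ0 : 0 ≤ ρ := by positivity
  have hs : m ≤ Real.sqrt (z.im * w.im) := by
    rw [show m = Real.sqrt (m ^ 2) by rw [Real.sqrt_sq hm.le]]
    apply Real.sqrt_le_sqrt; nlinarith
  have hs' : Real.sqrt (z.im * w.im) ≤ M := by
    rw [show M = Real.sqrt (M ^ 2) by rw [Real.sqrt_sq hM.le]]
    apply Real.sqrt_le_sqrt; nlinarith
  have hR0 : 0 ≤ R := by nlinarith
  have hρR : ρ ≤ R := by
    rw [hρdef, div_le_iff₀ (by positivity)]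
    calc D ≤ 2 * m * R := hR
    _ ≤ R * (2 * Real.sqrt (z.im * w.im)) := by nlinarith
  have h1 : ρ / Real.sqrt (1 + ρ ^ 2) ≤ Real.arsinh ρ := le_arsinh_div hρ0
  have hsR : 0 < Real.sqrt (1 + R ^ 2) := by positivity
  have h2 : ρ / Real.sqrt (1 + R ^ 2) ≤ ρ / Real.sqrt (1 + ρ ^ 2) := by
    gcongr
    all_goals nlinarith
  have h3 : dist z w = 2 * Real.arsinh ρ := UpperHalfPlane.dist_eq z w
  have h4 : D / M ≤ 2 * ρ := by
    rw [hρdef]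
    rw [show 2 * (D / (2 * Real.sqrt (z.im * w.im))) = D / Real.sqrt (z.im * w.im) by
      field_simp]
    gcongr
  calc D / (M * Real.sqrt (1 + R ^ 2)) = (D / M) / Real.sqrt (1 + R ^ 2) := by
        rw [div_div]
  _ ≤ (2 * ρ) / Real.sqrt (1 + R ^ 2) := by gcongr
  _ = 2 * (ρ / Real.sqrt (1 + R ^ 2)) := by ring
  _ ≤ 2 * (ρ / Real.sqrt (1 + ρ ^ 2)) := by linarith
  _ ≤ 2 * Real.arsinh ρ := by linarith
  _ = dist z w := h3.symm

lemma le_of_sq_le_sq {x y : ℝ} (hx : 0 ≤ x) (hy : 0 ≤ y) (h : x ^ 2 ≤ y ^ 2) : x ≤ y := by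
  nlinarith


lemma sq_sub_le_one {u w : ℝ} (h1 : 0 ≤ u) (h2 : u ≤ 1) (h3 : 0 ≤ w) (h4 : w ≤ 1) :
    (u - w) ^ 2 ≤ 1 := by nlinarith
/-- Upper bound constant for Euclidean sizes. -/
noncomputable def Kc (b : ℝ) : ℝ := Real.exp b + 2 * Real.exp b * Real.sinh (b / 2)

/-- Lower bound constant ("determinant"). -/
noncomputable def δc (a b d : ℝ) : ℝ :=
  (1 - Real.exp (-a)) * (2 * Real.exp (-b) * Real.sinh (d / 2))

noncomputable def Sc (b : ℝ) : ℝ := Real.sqrt (1 + (Kc b / Real.exp (-b)) ^ 2)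

noncomputable def Lconst (a b d : ℝ) : ℝ :=
  max 1 (max (Kc b / Real.exp (-b)) (Kc b * Real.exp b * Sc b / δc a b d))

lemma Kc_pos {b : ℝ} (hb : 0 < b) : 0 < Kc b := by
  have h1 := Real.exp_pos b
  have h2 : 0 < Real.sinh (b / 2) := Real.sinh_pos_iff.2 (by linarith)
  unfold Kc; nlinarith

lemma δc_pos {a b d : ℝ} (ha : 0 < a) (hd : 0 < d) : 0 < δc a b d := by
  have h1 : Real.exp (-a) < 1 := by
    rw [Real.exp_lt_one_iff]; linarith
  have h2 : 0 < Real.sinh (d / 2) := Real.sinh_pos_iff.2 (by linarith)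
  have h3 := Real.exp_pos (-b)
  unfold δc
  apply mul_pos (by linarith)
  positivity

lemma Sc_pos {b : ℝ} : 0 < Sc b := by
  unfold Sc; positivity

lemma core (a b d : ℝ) (ha : 0 < a) (hab : a ≤ b) (hd : 0 < d)
    (p₀ q₀ r₀ : ℍ) (hp_re : p₀.re = 0) (hq_re : q₀.re = 0) (hp_im : p₀.im = 1)
    (hpq : dist p₀ q₀ ∈ Set.Icc a b) (hpr : dist p₀ r₀ ∈ Set.Icc a b)
    (halt : 2 * r₀.im * Real.sinh (d / 2) ≤ |r₀.re|) :
    ∃ f₀ : ℝ × ℝ → ℍ,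
      f₀ (0, 0) = p₀ ∧ f₀ (1, 0) = q₀ ∧ f₀ (0, 1) = r₀ ∧
      ∀ x ∈ stdSimplex2, ∀ y ∈ stdSimplex2,
        (1 / Lconst a b d) * eucDist x y ≤ dist (f₀ x) (f₀ y) ∧
        dist (f₀ x) (f₀ y) ≤ Lconst a b d * eucDist x y := by
  have hb : 0 < b := lt_of_lt_of_le ha hab
  set m : ℝ := Real.exp (-b) with hmdef
  set M : ℝ := Real.exp b with hMdef
  have hm : 0 < m := Real.exp_pos _
  have hM : 0 < M := Real.exp_pos _
  have hm1 : m ≤ 1 := by rw [hmdef, show (1:ℝ) = Real.exp 0 by simp]; exact Real.exp_le_exp.2 (by linarith)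
  have h1M : 1 ≤ M := by rw [hMdef, show (1:ℝ) = Real.exp 0 by simp]; exact Real.exp_le_exp.2 (by linarith)
  set et : ℝ := q₀.im with hetdef
  set ri : ℝ := r₀.im with hridef
  have het0 : 0 < et := q₀.im_pos
  have hri0 : 0 < ri := r₀.im_pos
  -- imaginary part bounds
  have im_bound : ∀ z : ℍ, dist p₀ z ≤ b → m ≤ z.im ∧ z.im ≤ M := by
    intro z hz
    have h := UpperHalfPlane.dist_log_im_le p₀ z
    rw [Real.dist_eq, hp_im, Real.log_one] at h
    have habs : |Real.log z.im| ≤ b := by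
      rw [abs_sub_comm] at h
      simpa using le_trans h hz
    rw [abs_le] at habs
    constructor
    · rw [hmdef, ← Real.exp_log z.im_pos]
      exact Real.exp_le_exp.2 habs.1
    · rw [hMdef, ← Real.exp_log z.im_pos]
      exact Real.exp_le_exp.2 habs.2
  obtain ⟨hetm, hetM⟩ := im_bound q₀ hpq.2
  obtain ⟨hrim, hriM⟩ := im_bound r₀ hpr.2
  -- the vertices as complex numbers
  have hP : (p₀ : ℂ) = Complex.I := by
    apply Complex.ext
    · simpa using hp_re
    · simpa using hp_im
  set v : ℂ := (q₀ : ℂ) - Complex.I with hvdef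
  set w : ℂ := (r₀ : ℂ) - Complex.I with hwdef
  have hv_re : v.re = 0 := by simp [hvdef, hq_re]
  have hv_im : v.im = et - 1 := by simp [hvdef, hetdef]
  have hw_re : w.re = r₀.re := by simp [hwdef]
  have hw_im : w.im = ri - 1 := by simp [hwdef, hridef]
  have habs_v : ‖v‖ = |et - 1| := by
    rw [show v = ((et - 1 : ℝ) : ℂ) * Complex.I by
      apply Complex.ext <;> simp [hv_re, hv_im]]
    rw [norm_mul, Complex.norm_I, Complex.norm_real, Real.norm_eq_abs, mul_one]
  -- lower bound on |et - 1|
  have hdistpq : dist p₀ q₀ = |Real.log et| := by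
    rw [UpperHalfPlane.dist_of_re_eq (hp_re.trans hq_re.symm), hp_im, Real.log_one,
      Real.dist_eq, zero_sub, abs_neg]
  have hc1 : 1 - Real.exp (-a) ≤ |et - 1| := by
    have hda : a ≤ |Real.log et| := by rw [← hdistpq]; exact hpq.1
    have hea : 0 < Real.exp a := Real.exp_pos a
    have hprod : Real.exp (-a) * Real.exp a = 1 := by
      rw [← Real.exp_add]; simp
    rcases le_or_gt 0 (Real.log et) with hle | hlt
    · have : a ≤ Real.log et := by rwa [abs_of_nonneg hle] at hda
      have h2 : Real.exp a ≤ et := by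
        rw [← Real.exp_log het0]; exact Real.exp_le_exp.2 this
      have h3 : Real.exp a - 1 ≤ |et - 1| := by
        rw [abs_of_nonneg (by nlinarith [Real.one_le_exp (le_of_lt ha)])]
        linarith
      nlinarith [sq_nonneg (Real.exp a - 1), Real.exp_pos (-a)]
    · have : Real.log et ≤ -a := by
        rw [abs_of_neg hlt] at hda; linarith
      have h2 : et ≤ Real.exp (-a) := by
        rw [← Real.exp_log het0]; exact Real.exp_le_exp.2 this
      have h4 : Real.exp (-a) < 1 := by rw [Real.exp_lt_one_iff]; linarith
      rw [abs_of_nonpos (by linarith)]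
      linarith
  have hvC : ‖v‖ ≤ M := by
    rw [habs_v, abs_le]
    constructor <;> [linarith; linarith]
  -- bound on |w|
  have hwC : ‖w‖ ≤ 2 * M * Real.sinh (b / 2) := by
    have hsh := UpperHalfPlane.sinh_half_dist p₀ r₀
    have him : p₀.im * r₀.im = ri := by rw [hp_im, one_mul]
    have hd1 : dist ((p₀ : ℂ)) ((r₀ : ℂ)) = ‖w‖ := by
      rw [Complex.dist_eq, hP, show Complex.I - (r₀ : ℂ) = -w by rw [hwdef]; ring, norm_neg]
    rw [hd1, him] at hsh
    have hsql : Real.sqrt ri ≤ M := by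
      rw [show M = Real.sqrt (M * M) by rw [Real.sqrt_mul_self hM.le]]
      apply Real.sqrt_le_sqrt; nlinarith
    have hs2 : Real.sinh (dist p₀ r₀ / 2) ≤ Real.sinh (b / 2) := by
      apply Real.sinh_le_sinh.2; linarith [hpr.2]
    have hs0 : 0 ≤ Real.sinh (dist p₀ r₀ / 2) := by
      apply Real.sinh_nonneg_iff.2; positivity
    have hAw : ‖w‖ = 2 * Real.sqrt ri * Real.sinh (dist p₀ r₀ / 2) := by
      rw [hsh]; field_simp
    rw [hAw]
    have hsb : 0 ≤ Real.sinh (b / 2) := le_trans hs0 hs2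
    nlinarith [Real.sqrt_nonneg ri]
  -- lower bound on |w.re|
  have hwre : 2 * m * Real.sinh (d / 2) ≤ |w.re| := by
    rw [hw_re]
    have hs : 0 < Real.sinh (d / 2) := Real.sinh_pos_iff.2 (by linarith)
    nlinarith
  have hs2 : 0 < Real.sinh (d / 2) := Real.sinh_pos_iff.2 (by linarith)
  -- determinant lower bound
  set det : ℝ := v.re * w.im - v.im * w.re with hdetdef
  have hdet : δc a b d ≤ |det| := by
    have h1 : |det| = |et - 1| * |w.re| := by
      rw [hdetdef, hv_re, hv_im, zero_mul, zero_sub, abs_neg, abs_mul]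
    rw [h1]
    unfold δc
    have h2 : 0 ≤ 1 - Real.exp (-a) := by
      have : Real.exp (-a) < 1 := by rw [Real.exp_lt_one_iff]; linarith
      linarith
    apply mul_le_mul hc1 hwre (by positivity) (abs_nonneg _)
  have hdet0 : 0 < δc a b d := δc_pos ha hd
  have hK : 0 < Kc b := Kc_pos hb
  have hKeq : Kc b = M + 2 * M * Real.sinh (b / 2) := by rw [Kc, hMdef]
  -- the affine map
  set F : ℝ × ℝ → ℂ := fun x => Complex.I + (x.1 : ℂ) * v + (x.2 : ℂ) * w with hFdef
  have hFim : ∀ x : ℝ × ℝ, (F x).im = 1 + x.1 * (et - 1) + x.2 * (ri - 1) := by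
    intro x
    rw [hFdef]
    simp [Complex.add_im, Complex.mul_im, hv_im, hw_im]
  have him : ∀ x ∈ stdSimplex2, m ≤ (F x).im ∧ (F x).im ≤ M := by
    rintro x ⟨hx1, hx2, hx3⟩
    rw [hFim x]
    constructor
    · linarith [mul_nonneg hx1 (sub_nonneg.2 hetm), mul_nonneg hx2 (sub_nonneg.2 hrim),
        mul_nonneg (sub_nonneg.2 hx3) (sub_nonneg.2 hm1)]
    · linarith [mul_nonneg hx1 (sub_nonneg.2 hetM), mul_nonneg hx2 (sub_nonneg.2 hriM),
        mul_nonneg (sub_nonneg.2 hx3) (sub_nonneg.2 h1M)]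
  have hFpos : ∀ x ∈ stdSimplex2, 0 < (F x).im := fun x hx => lt_of_lt_of_le hm (him x hx).1
  set f₀ : ℝ × ℝ → ℍ := fun x =>
    if h : 0 < (F x).im then UpperHalfPlane.mk (F x) h else p₀ with hf₀def
  have hcoe : ∀ x ∈ stdSimplex2, ((f₀ x : ℍ) : ℂ) = F x := by
    intro x hx
    rw [hf₀def]
    simp only [dif_pos (hFpos x hx)]
  have himf : ∀ x ∈ stdSimplex2, (f₀ x).im = (F x).im := by
    intro x hx
    rw [show (f₀ x).im = ((f₀ x : ℍ) : ℂ).im from rfl, hcoe x hx]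
  -- endpoint values
  have h00 : (0, 0) ∈ stdSimplex2 := by constructor <;> norm_num
  have h10 : (1, 0) ∈ stdSimplex2 := by refine ⟨by norm_num, by norm_num, by norm_num⟩
  have h01 : (0, 1) ∈ stdSimplex2 := by refine ⟨by norm_num, by norm_num, by norm_num⟩
  have hF00 : F (0, 0) = (p₀ : ℂ) := by rw [hFdef, hP]; push_cast; ring
  have hF10 : F (1, 0) = (q₀ : ℂ) := by rw [hFdef, hvdef]; push_cast; ring
  have hF01 : F (0, 1) = (r₀ : ℂ) := by rw [hFdef, hwdef]; push_cast; ring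
  refine ⟨f₀, ?_, ?_, ?_, ?_⟩
  · apply UpperHalfPlane.ext; rw [hcoe _ h00, hF00]
  · apply UpperHalfPlane.ext; rw [hcoe _ h10, hF10]
  · apply UpperHalfPlane.ext; rw [hcoe _ h01, hF01]
  intro x hx y hy
  set s : ℝ := x.1 - y.1 with hsdef
  set t : ℝ := x.2 - y.2 with htdef
  set z : ℂ := (s : ℂ) * v + (t : ℂ) * w with hzdef
  have hFdiff : F x - F y = z := by
    rw [hFdef, hzdef, hsdef, htdef]; push_cast; ring
  set A : ℝ := ‖z‖ with hAdef
  have hA0 : 0 ≤ A := norm_nonneg z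
  have hDeq : dist (F x) (F y) = A := by rw [Complex.dist_eq, hFdiff]
  have heuc0 : 0 ≤ eucDist x y := Real.sqrt_nonneg _
  have heuc_eq : eucDist x y = Real.sqrt (s ^ 2 + t ^ 2) := by
    rw [eucDist, hsdef, htdef]
  have heuc2 : eucDist x y ^ 2 = s ^ 2 + t ^ 2 := by
    rw [heuc_eq, Real.sq_sqrt (by positivity)]
  have hseuc : |s| ≤ eucDist x y := by
    rw [heuc_eq, ← Real.sqrt_sq_eq_abs]
    apply Real.sqrt_le_sqrt; linarith [sq_nonneg t]
  have hteuc : |t| ≤ eucDist x y := by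
    rw [heuc_eq, ← Real.sqrt_sq_eq_abs]
    apply Real.sqrt_le_sqrt; linarith [sq_nonneg s]
  -- upper bound on A
  have hAup : A ≤ Kc b * eucDist x y := by
    have h1 : A ≤ |s| * ‖v‖ + |t| * ‖w‖ := by
      rw [hAdef, hzdef]
      refine le_trans (norm_add_le _ _) ?_
      rw [norm_mul, norm_mul, Complex.norm_real, Complex.norm_real, Real.norm_eq_abs, Real.norm_eq_abs]
    have hvw0 : 0 ≤ ‖v‖ := norm_nonneg v
    have hww0 : 0 ≤ ‖w‖ := norm_nonneg w
    have hsb0 : 0 ≤ Real.sinh (b / 2) := by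
      apply Real.sinh_nonneg_iff.2; linarith
    rw [hKeq]
    linarith [mul_le_mul hseuc hvC hvw0 heuc0, mul_le_mul hteuc hwC hww0 heuc0]
  -- lower bound on A
  have hzre : z.re = s * v.re + t * w.re := by
    rw [hzdef]; simp [Complex.add_re, Complex.mul_re]
  have hzim : z.im = s * v.im + t * w.im := by
    rw [hzdef]; simp [Complex.add_im, Complex.mul_im]
  have hcross1 : (s * det) ^ 2 ≤ A ^ 2 * ‖w‖ ^ 2 := by
    calc (s * det) ^ 2 = (z.re * w.im - z.im * w.re) ^ 2 := by
          rw [hzre, hzim, hdetdef]; ring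
    _ ≤ ‖z‖ ^ 2 * ‖w‖ ^ 2 := cross_sq_le z w
    _ = A ^ 2 * ‖w‖ ^ 2 := by rw [hAdef]
  have hcross2 : (t * det) ^ 2 ≤ A ^ 2 * ‖v‖ ^ 2 := by
    calc (t * det) ^ 2 = (z.re * v.im - z.im * v.re) ^ 2 := by
          rw [hzre, hzim, hdetdef]; ring
    _ ≤ ‖z‖ ^ 2 * ‖v‖ ^ 2 := cross_sq_le z v
    _ = A ^ 2 * ‖v‖ ^ 2 := by rw [hAdef]
  have hAlow : δc a b d * eucDist x y ≤ Kc b * A := by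
    apply le_of_sq_le_sq (mul_nonneg hdet0.le heuc0) (mul_nonneg hK.le hA0)
    have hvw : ‖v‖ ^ 2 + ‖w‖ ^ 2 ≤ Kc b ^ 2 := by
      have hvw0 : 0 ≤ ‖v‖ := norm_nonneg v
      have hww0 : 0 ≤ ‖w‖ := norm_nonneg w
      have hsb0 : 0 ≤ Real.sinh (b / 2) := by
        apply Real.sinh_nonneg_iff.2; linarith
      rw [hKeq]
      linarith [pow_le_pow_left₀ hvw0 hvC 2, pow_le_pow_left₀ hww0 hwC 2,
        mul_nonneg (mul_nonneg hM.le hM.le) hsb0]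
    have hd2 : δc a b d ^ 2 ≤ det ^ 2 := by
      linarith [sq_abs det, pow_le_pow_left₀ hdet0.le hdet 2]
    calc (δc a b d * eucDist x y) ^ 2 = δc a b d ^ 2 * eucDist x y ^ 2 := by ring
    _ ≤ det ^ 2 * eucDist x y ^ 2 := mul_le_mul_of_nonneg_right hd2 (sq_nonneg _)
    _ = (s * det) ^ 2 + (t * det) ^ 2 := by rw [heuc2]; ring
    _ ≤ A ^ 2 * ‖w‖ ^ 2 + A ^ 2 * ‖v‖ ^ 2 := by linarith
    _ = A ^ 2 * (‖v‖ ^ 2 + ‖w‖ ^ 2) := by ring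
    _ ≤ A ^ 2 * Kc b ^ 2 := mul_le_mul_of_nonneg_left hvw (sq_nonneg A)
    _ = (Kc b * A) ^ 2 := by ring
  -- euclidean diameter of the simplex
  have heuc_le : eucDist x y ≤ 2 := by
    obtain ⟨hx1, hx2, hx3⟩ := hx
    obtain ⟨hy1, hy2, hy3⟩ := hy
    rw [heuc_eq, show (2 : ℝ) = Real.sqrt 4 by
      rw [show (4 : ℝ) = 2 ^ 2 by norm_num, Real.sqrt_sq (by norm_num)]]
    apply Real.sqrt_le_sqrt
    rw [hsdef, htdef]
    have e1 : (x.1 - y.1) ^ 2 ≤ 1 := sq_sub_le_one hx1 (by linarith) hy1 (by linarith)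
    have e2 : (x.2 - y.2) ^ 2 ≤ 1 := sq_sub_le_one hx2 (by linarith) hy2 (by linarith)
    linarith
  -- hyperbolic distance of image points
  have hdcoe : dist ((f₀ x : ℍ) : ℂ) ((f₀ y : ℍ) : ℂ) = A := by
    rw [hcoe x hx, hcoe y hy, hDeq]
  have himx := (him x hx); have himy := (him y hy)
  have himx1 : m ≤ (f₀ x).im := by rw [himf x hx]; exact himx.1
  have himx2 : (f₀ x).im ≤ M := by rw [himf x hx]; exact himx.2
  have himy1 : m ≤ (f₀ y).im := by rw [himf y hy]; exact himy.1
  have himy2 : (f₀ y).im ≤ M := by rw [himf y hy]; exact himy.2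
  have hL1 : (1 : ℝ) ≤ Lconst a b d := le_max_left _ _
  have hL0 : 0 < Lconst a b d := lt_of_lt_of_le one_pos hL1
  constructor
  · -- lower bilipschitz bound
    have hRbound : dist ((f₀ x : ℍ) : ℂ) ((f₀ y : ℍ) : ℂ) ≤ 2 * m * (Kc b / m) := by
      rw [hdcoe, show 2 * m * (Kc b / m) = 2 * Kc b by field_simp]
      linarith [mul_le_mul_of_nonneg_left heuc_le hK.le, hAup]
    have hlow := div_le_dist (f₀ x) (f₀ y) m M (Kc b / m) hm himx1 himy1 himx2 himy2 hRbound
    rw [hdcoe] at hlow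
    have hScpos : 0 < Sc b := Sc_pos
    have hSeq : Real.sqrt (1 + (Kc b / m) ^ 2) = Sc b := by rw [Sc, hmdef]
    rw [hSeq] at hlow
    have hMS : 0 < M * Sc b := by positivity
    have hgoal : (1 / Lconst a b d) * eucDist x y ≤ A / (M * Sc b) := by
      have hstep : δc a b d * eucDist x y / (Kc b * (M * Sc b)) ≤ A / (M * Sc b) := by
        rw [div_le_div_iff₀ (by positivity) hMS]
        linarith [mul_le_mul_of_nonneg_right hAlow hMS.le]
      refine le_trans ?_ hstep
      have h1L : 1 / Lconst a b d ≤ δc a b d / (Kc b * (M * Sc b)) := by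
        rw [div_le_div_iff₀ hL0 (by positivity)]
        have hLb : Kc b * M * Sc b / δc a b d ≤ Lconst a b d := by
          refine le_trans ?_ (le_max_right _ _)
          rw [hMdef]
          exact le_max_right _ _
        rw [div_le_iff₀ hdet0] at hLb
        linarith
      calc 1 / Lconst a b d * eucDist x y
          ≤ (δc a b d / (Kc b * (M * Sc b))) * eucDist x y := by
            apply mul_le_mul_of_nonneg_right h1L heuc0
      _ = δc a b d * eucDist x y / (Kc b * (M * Sc b)) := by ring
    exact le_trans hgoal hlow
  · -- upper bilipschitz bound
    have hup := dist_le_div (f₀ x) (f₀ y) m hm himx1 himy1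
    rw [hdcoe] at hup
    refine le_trans hup ?_
    have h1 : A / m ≤ (Kc b / m) * eucDist x y := by
      rw [div_le_iff₀ hm]
      calc A ≤ Kc b * eucDist x y := hAup
      _ = Kc b / m * eucDist x y * m := by field_simp
    refine le_trans h1 ?_
    apply mul_le_mul_of_nonneg_right ?_ heuc0
    refine le_trans ?_ (le_max_right _ _)
    exact le_max_left _ _


end HypAux

/-- Two-dimensional case of Lemma 1: every `(a,b,d)`-good hyperbolic triangle — edge
lengths in `[a,b]` and every altitude at least `d` — is `L`-bilipschitz to the standard
Euclidean 2-simplex, for a constant `L = L(a,b,d)`. -/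
theorem good_triangle_bilipschitz_to_standard_simplex (a b d : ℝ) (ha : 0 < a)
    (hab : a ≤ b) (hd : 0 < d) :
    ∃ L : ℝ, 1 ≤ L ∧ ∀ p q r : ℍ,
      dist p q ∈ Set.Icc a b → dist q r ∈ Set.Icc a b → dist p r ∈ Set.Icc a b →
      d ≤ Metric.infDist p (geodLine q r) →
      d ≤ Metric.infDist q (geodLine p r) →
      d ≤ Metric.infDist r (geodLine p q) →
      ∃ f : ℝ × ℝ → ℍ,
        f (0, 0) = p ∧ f (1, 0) = q ∧ f (0, 1) = r ∧
        ∀ x ∈ stdSimplex2, ∀ y ∈ stdSimplex2,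
          (1 / L) * eucDist x y ≤ dist (f x) (f y) ∧
          dist (f x) (f y) ≤ L * eucDist x y := by
  refine ⟨HypAux.Lconst a b d, le_max_left _ _, ?_⟩
  intro p q r hpq hqr hpr h1 h2 h3
  obtain ⟨e, hep, heq, heim⟩ := HypAux.normalize p q
  have hdpq : dist (e.g p) (e.g q) = dist p q := e.dist_g p q
  have hdpr : dist (e.g p) (e.g r) = dist p r := e.dist_g p r
  set r₀ := e.g r with hr₀
  have hri : 0 < r₀.im := r₀.im_pos
  have hx₀im : (0 : ℝ) < ((r₀.im : ℂ) * Complex.I).im := by simp [hri]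
  set x₀ : ℍ := UpperHalfPlane.mk ((r₀.im : ℂ) * Complex.I) hx₀im with hx₀
  have hx₀re : x₀.re = 0 := by
    rw [show x₀.re = ((r₀.im : ℂ) * Complex.I).re from rfl]
    simp
  have hx₀im' : x₀.im = r₀.im := by
    rw [show x₀.im = ((r₀.im : ℂ) * Complex.I).im from rfl]
    simp
  have hmem0 : x₀ ∈ geodLine (e.g p) (e.g q) :=
    HypAux.vertical_mem_geodLine _ _ _ (by rw [hep, heq]) (by rw [hx₀re, hep])
  have hmem : e.ginv x₀ ∈ geodLine p q := HypAux.ginv_mem_geodLine e p q x₀ hmem0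
  have hd1 : d ≤ dist r (e.ginv x₀) := le_trans h3 (Metric.infDist_le_dist_of_mem hmem)
  have hd2 : dist r (e.ginv x₀) = dist r₀ x₀ := by
    rw [← e.dist_g r (e.ginv x₀), e.right]
  have hdist_rx : dist r₀ x₀ = 2 * Real.arsinh (|r₀.re| / (2 * r₀.im)) := by
    rw [UpperHalfPlane.dist_eq]
    have hc : dist ((r₀ : ℍ) : ℂ) ((x₀ : ℍ) : ℂ) = |r₀.re| := by
      rw [Complex.dist_eq]
      have hsub : (r₀ : ℂ) - (x₀ : ℂ) = ((r₀.re : ℝ) : ℂ) := by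
        rw [show (x₀ : ℂ) = (r₀.im : ℂ) * Complex.I from rfl]
        apply Complex.ext <;> simp
      rw [hsub, Complex.norm_real, Real.norm_eq_abs]
    rw [hc, hx₀im', Real.sqrt_mul_self hri.le]
  have halt : 2 * r₀.im * Real.sinh (d / 2) ≤ |r₀.re| := by
    have h5 : d / 2 ≤ Real.arsinh (|r₀.re| / (2 * r₀.im)) := by
      have h7 := hd1
      rw [hd2, hdist_rx] at h7
      linarith
    have h6 := Real.sinh_le_sinh.2 h5
    rw [Real.sinh_arsinh] at h6
    rw [le_div_iff₀ (by positivity)] at h6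
    linarith
  obtain ⟨f₀, hf00, hf10, hf01, hbound⟩ :=
    HypAux.core a b d ha hab hd (e.g p) (e.g q) r₀ hep heq heim
      (by rw [hdpq]; exact hpq) (by rw [hdpr]; exact hpr) halt
  refine ⟨fun x => e.ginv (f₀ x), ?_, ?_, ?_, ?_⟩
  · show e.ginv (f₀ (0, 0)) = p
    rw [hf00]
    exact e.left p
  · show e.ginv (f₀ (1, 0)) = q
    rw [hf10]
    exact e.left q
  · show e.ginv (f₀ (0, 1)) = r
    rw [hf01]
    exact e.left r
  intro x hx y hy
  have hde : dist (e.ginv (f₀ x)) (e.ginv (f₀ y)) = dist (f₀ x) (f₀ y) := e.dist_ginv _ _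
  constructor
  · show (1 / HypAux.Lconst a b d) * eucDist x y ≤ dist (e.ginv (f₀ x)) (e.ginv (f₀ y))
    rw [hde]
    exact (hbound x hx y hy).1
  · show dist (e.ginv (f₀ x)) (e.ginv (f₀ y)) ≤ HypAux.Lconst a b d * eucDist x y
    rw [hde]
    exact (hbound x hx y hy).2
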